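/- Let d ≥ 3, x0 ∈ (0,1/4), ε ∈ (0,1), and let σ = σ_d be the unique positive solution of x0²/(2σ²) = log( dσ/(√(2π) ε x0) ). Let ξ⁺ be uniform on B^d_+ = {β ∈ B^d : ∏ β_i > 0}, ξ⁻ uniform on B^d_− = {β ∈ B^d : ∏ β_i < 0}, and X ~ N(0, σ² Id) independent of (ξ⁺, ξ⁻); set Z⁺ = ξ⁺ + X and Z⁻ = ξ⁻ + X. Then with probability at least 1 − 2ε, simultaneously F(Z⁺) = 1 and F(Z⁻) = −1 when d ≡ 0,1 (mod 4), and F(Z⁺) = −1 and F(Z⁻) = 1 when d ≡ 2,3 (mod 4). Consequently |E[F(Z⁺)] − E[F(Z⁻)]| ≥ 2 − 8ε. -/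

import Mathlib

open MeasureTheory ProbabilityTheory
open scoped ENNReal NNReal

noncomputable section

/-- `ReLU(t) = max(t, 0)`. -/
def relu (t : ℝ) : ℝ := max t 0

/-- The set `B = {-3/2, -1/2, 1/2, 3/2}` as a finset of reals. -/
def Bset : Finset ℝ := {-3/2, -1/2, 1/2, 3/2}

/-- The points of `B^d` with positive product of coordinates. -/
def BdPlus (d : ℕ) : Finset (Fin d → ℝ) :=
  (Fintype.piFinset fun _ : Fin d => Bset).filter fun β => 0 < ∏ i, β i

/-- The points of `B^d` with negative product of coordinates. -/
def BdMinus (d : ℕ) : Finset (Fin d → ℝ) :=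
  (Fintype.piFinset fun _ : Fin d => Bset).filter fun β => ∏ i, β i < 0

/-- The two-layer bump network `f1`. -/
def f1 (x0 : ℝ) (x : ℝ) : ℝ :=
  ∑ β ∈ Bset, (Real.sign β / x0) *
    (relu (x - (β - 2 * x0)) - relu (x - (β - x0)) - relu (x - (β + x0)) +
      relu (x - (β + 2 * x0)))

/-- The two-layer zig-zag network `f2` (even and odd versions). -/
def f2 (d : ℕ) (x : ℝ) : ℝ :=
  if Even d then
    1 - relu x - relu (-x) - (-1 : ℝ) ^ (d / 2) * (relu (x - d) + relu (-x - d)) -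
      2 * ∑ i ∈ Finset.Icc 1 ((d - 2) / 2),
        (-1 : ℝ) ^ i * (relu (x - 2 * i) + relu (-x - 2 * i))
  else
    x + (-1 : ℝ) ^ ((d - 1) / 2) * (-relu (x - d) + relu (-x - d)) +
      2 * ∑ i ∈ Finset.range ((d - 1) / 2),
        (-1 : ℝ) ^ i * (-relu (x - (2 * i + 1)) + relu (-x - (2 * i + 1)))

/-- The three-layer discriminator `F(x) = f2(∑_i f1(x_i))`. -/
def Fdisc (d : ℕ) (x0 : ℝ) (x : Fin d → ℝ) : ℝ :=
  f2 d (∑ i, f1 x0 (x i))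

lemma relu_of_nonneg {t : ℝ} (h : 0 ≤ t) : relu t = t := max_eq_left h
lemma relu_of_nonpos {t : ℝ} (h : t ≤ 0) : relu t = 0 := max_eq_right h
lemma relu_eq_ite (t : ℝ) : relu t = if 0 ≤ t then t else 0 := by
  unfold relu; split_ifs with h
  · exact max_eq_left h
  · exact max_eq_right (le_of_not_ge h)

lemma bump_in {x0 c x : ℝ} (hx0 : 0 < x0) (h1 : c - x0 ≤ x) (h2 : x ≤ c + x0) :
    relu (x - (c - 2 * x0)) - relu (x - (c - x0)) - relu (x - (c + x0)) +
      relu (x - (c + 2 * x0)) = x0 := by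
  rw [relu_of_nonneg (by linarith), relu_of_nonneg (by linarith),
    relu_of_nonpos (by linarith), relu_of_nonpos (by linarith)]
  ring

lemma bump_left {x0 c x : ℝ} (hx0 : 0 < x0) (h : x ≤ c - 2 * x0) :
    relu (x - (c - 2 * x0)) - relu (x - (c - x0)) - relu (x - (c + x0)) +
      relu (x - (c + 2 * x0)) = 0 := by
  rw [relu_of_nonpos (by linarith), relu_of_nonpos (by linarith),
    relu_of_nonpos (by linarith), relu_of_nonpos (by linarith)]
  ring

lemma bump_right {x0 c x : ℝ} (hx0 : 0 < x0) (h : c + 2 * x0 ≤ x) :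
    relu (x - (c - 2 * x0)) - relu (x - (c - x0)) - relu (x - (c + x0)) +
      relu (x - (c + 2 * x0)) = 0 := by
  rw [relu_of_nonneg (by linarith), relu_of_nonneg (by linarith),
    relu_of_nonneg (by linarith), relu_of_nonneg (by linarith)]
  ring

lemma bump_bounds (x0 c x : ℝ) (hx0 : 0 < x0) :
    relu (x - (c - 2 * x0)) - relu (x - (c - x0)) - relu (x - (c + x0)) +
      relu (x - (c + 2 * x0)) ∈ Set.Icc 0 x0 := by
  simp only [relu_eq_ite, Set.mem_Icc]
  split_ifs <;> constructor <;> linarith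

lemma f1_expand (x0 x : ℝ) :
    f1 x0 x = (-1 / x0) *
        (relu (x - (-3/2 - 2 * x0)) - relu (x - (-3/2 - x0)) - relu (x - (-3/2 + x0)) +
          relu (x - (-3/2 + 2 * x0)))
      + (-1 / x0) *
        (relu (x - (-1/2 - 2 * x0)) - relu (x - (-1/2 - x0)) - relu (x - (-1/2 + x0)) +
          relu (x - (-1/2 + 2 * x0)))
      + (1 / x0) *
        (relu (x - (1/2 - 2 * x0)) - relu (x - (1/2 - x0)) - relu (x - (1/2 + x0)) +
          relu (x - (1/2 + 2 * x0)))
      + (1 / x0) *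
        (relu (x - (3/2 - 2 * x0)) - relu (x - (3/2 - x0)) - relu (x - (3/2 + x0)) +
          relu (x - (3/2 + 2 * x0))) := by
  rw [f1, Bset]
  rw [show ((-3/2 : ℝ)) = (-3/2 : ℝ) from rfl]
  rw [Finset.sum_insert (by norm_num), Finset.sum_insert (by norm_num),
    Finset.sum_insert (by norm_num), Finset.sum_singleton]
  rw [Real.sign_of_neg (by norm_num : (-3/2 : ℝ) < 0),
    Real.sign_of_neg (by norm_num : (-1/2 : ℝ) < 0),
    Real.sign_of_pos (by norm_num : (0:ℝ) < 1/2),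
    Real.sign_of_pos (by norm_num : (0:ℝ) < 3/2)]
  ring

lemma f1_near {x0 b t : ℝ} (hx0 : 0 < x0) (hx0' : x0 < 1/4) (hb : b ∈ Bset)
    (ht : |t| ≤ x0) : f1 x0 (b + t) = if b < 0 then -1 else 1 := by
  have ht1 : -x0 ≤ t := neg_le_of_abs_le ht
  have ht2 : t ≤ x0 := le_of_abs_le ht
  have hne : x0 ≠ 0 := ne_of_gt hx0
  simp only [Bset, Finset.mem_insert, Finset.mem_singleton] at hb
  rw [f1_expand]
  rcases hb with rfl | rfl | rfl | rfl
  · rw [bump_in hx0 (by linarith) (by linarith), bump_left hx0 (by linarith),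
      bump_left hx0 (by linarith), bump_left hx0 (by linarith)]
    rw [if_pos (by norm_num)]; field_simp; ring
  · rw [bump_right hx0 (by linarith), bump_in hx0 (by linarith) (by linarith),
      bump_left hx0 (by linarith), bump_left hx0 (by linarith)]
    rw [if_pos (by norm_num)]; field_simp; ring
  · rw [bump_right hx0 (by linarith), bump_right hx0 (by linarith),
      bump_in hx0 (by linarith) (by linarith), bump_left hx0 (by linarith)]
    rw [if_neg (by norm_num)]; field_simp; ring
  · rw [bump_right hx0 (by linarith), bump_right hx0 (by linarith),
      bump_right hx0 (by linarith), bump_in hx0 (by linarith) (by linarith)]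
    rw [if_neg (by norm_num)]; field_simp; ring

lemma quot_neg_bounds {x0 b : ℝ} (hx0 : 0 < x0) (hb : 0 ≤ b) (hb' : b ≤ x0) :
    -1 ≤ -1 / x0 * b ∧ -1 / x0 * b ≤ 1 := by
  have h1 : -1 / x0 * b = -(b / x0) := by ring
  have e1 := (div_le_one hx0).mpr hb'
  have e2 := div_nonneg hb hx0.le
  rw [h1]; constructor <;> linarith

lemma quot_pos_bounds {x0 b : ℝ} (hx0 : 0 < x0) (hb : 0 ≤ b) (hb' : b ≤ x0) :
    -1 ≤ 1 / x0 * b ∧ 1 / x0 * b ≤ 1 := by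
  have h1 : 1 / x0 * b = b / x0 := by ring
  have e1 := (div_le_one hx0).mpr hb'
  have e2 := div_nonneg hb hx0.le
  rw [h1]; constructor <;> linarith

set_option maxHeartbeats 2000000 in
lemma abs_f1_le {x0 : ℝ} (hx0 : 0 < x0) (hx0' : x0 < 1/4) (x : ℝ) : |f1 x0 x| ≤ 1 := by
  rw [f1_expand, abs_le]
  have B1 := bump_bounds x0 (-3/2) x hx0
  have B2 := bump_bounds x0 (-1/2) x hx0
  have B3 := bump_bounds x0 (1/2) x hx0
  have B4 := bump_bounds x0 (3/2) x hx0
  simp only [Set.mem_Icc] at B1 B2 B3 B4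
  rcases le_total x (-1) with hx | hx
  · rw [bump_left hx0 (c := -1/2) (by linarith), bump_left hx0 (c := 1/2) (by linarith),
      bump_left hx0 (c := 3/2) (by linarith)]
    have h := quot_neg_bounds hx0 B1.1 B1.2
    constructor <;> linarith [h.1, h.2]
  · rcases le_total x 0 with hx2 | hx2
    · rw [bump_right hx0 (c := -3/2) (by linarith), bump_left hx0 (c := 1/2) (by linarith),
        bump_left hx0 (c := 3/2) (by linarith)]
      have h := quot_neg_bounds hx0 B2.1 B2.2
      constructor <;> linarith [h.1, h.2]
    · rcases le_total x 1 with hx3 | hx3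
      · rw [bump_right hx0 (c := -3/2) (by linarith), bump_right hx0 (c := -1/2) (by linarith),
          bump_left hx0 (c := 3/2) (by linarith)]
        have h := quot_pos_bounds hx0 B3.1 B3.2
        constructor <;> linarith [h.1, h.2]
      · rw [bump_right hx0 (c := -3/2) (by linarith), bump_right hx0 (c := -1/2) (by linarith),
          bump_right hx0 (c := 1/2) (by linarith)]
        have h := quot_pos_bounds hx0 B4.1 B4.2
        constructor <;> linarith [h.1, h.2]

def gsum (j : ℕ) (s : ℝ) : ℝ := ∑ i ∈ Finset.Icc 1 j, (-1:ℝ)^i * relu (s - 2*i)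
def hsum (j : ℕ) (s : ℝ) : ℝ := ∑ i ∈ Finset.range j, (-1:ℝ)^i * relu (s - (2*i+1))

lemma gsum_zero (s : ℝ) : gsum 0 s = 0 := by simp [gsum]

lemma gsum_succ (j : ℕ) (s : ℝ) :
    gsum (j+1) s = gsum j s + (-1:ℝ)^(j+1) * relu (s - 2*(j+1)) := by
  rw [gsum, gsum, Finset.sum_Icc_succ_top (by omega : 1 ≤ j+1)]
  push_cast; ring

lemma hsum_succ (j : ℕ) (s : ℝ) :
    hsum (j+1) s = hsum j s + (-1:ℝ)^j * relu (s - (2*j+1)) := by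
  rw [hsum, hsum, Finset.sum_range_succ]

lemma gsum_formula : ∀ (j : ℕ) {s : ℝ}, 2*(j:ℝ) ≤ s →
    1 - s - 2 * gsum j s = (-1:ℝ)^(j+1) * (s - (2*(j:ℝ)+1)) := by
  intro j
  induction j with
  | zero => intro s hs; rw [gsum_zero]; push_cast; ring
  | succ j ih =>
    intro s hs
    push_cast at hs
    have h2 : 2*(j:ℝ) ≤ s := by linarith
    rw [gsum_succ, relu_of_nonneg (by push_cast; linarith)]
    have := ih h2
    have hpow : (-1:ℝ)^(j+2) = -(-1:ℝ)^(j+1) := by rw [pow_succ]; ring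
    push_cast at this ⊢
    rw [show j + 1 + 1 = j + 2 from rfl] at *
    nlinarith [this, hpow]
  
lemma gsum_abs : ∀ (j : ℕ) {s : ℝ}, 0 ≤ s → s ≤ 2*(j:ℝ) + 2 →
    |1 - s - 2 * gsum j s| ≤ 1 := by
  intro j
  induction j with
  | zero => intro s h0 h2; rw [gsum_zero]; rw [abs_le]; constructor <;> push_cast at h2 <;> linarith
  | succ j ih =>
    intro s h0 h2
    rcases le_total s (2*(j:ℝ)+2) with hs | hs
    · rw [gsum_succ, relu_of_nonpos (by push_cast; linarith)]
      have := ih h0 hs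
      simpa using this
    · have hform := gsum_formula (j+1) (s := s) (by push_cast; push_cast at hs; linarith)
      rw [hform]
      rw [abs_mul, abs_pow, abs_neg, abs_one, one_pow, one_mul, abs_le]
      push_cast at h2 hs ⊢
      constructor <;> linarith
      
lemma hsum_formula : ∀ (j : ℕ) {s : ℝ}, 2*(j:ℝ) - 1 ≤ s →
    s - 2 * hsum j s = (-1:ℝ)^j * (s - 2*(j:ℝ)) := by
  intro j
  induction j with
  | zero => intro s hs; simp [hsum]
  | succ j ih =>
    intro s hs
    push_cast at hs
    have h2 : 2*(j:ℝ) - 1 ≤ s := by linarith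
    rw [hsum_succ, relu_of_nonneg (by push_cast; linarith)]
    have := ih h2
    have hpow : (-1:ℝ)^(j+1) = -(-1:ℝ)^j := by rw [pow_succ]; ring
    push_cast at this ⊢
    nlinarith [this, hpow]

lemma hsum_abs : ∀ (j : ℕ) {s : ℝ}, 0 ≤ s → s ≤ 2*(j:ℝ) + 1 →
    |s - 2 * hsum j s| ≤ 1 := by
  intro j
  induction j with
  | zero => intro s h0 h2; push_cast at h2; simp [hsum]; rw [abs_le]; constructor <;> linarith
  | succ j ih =>
    intro s h0 h2
    rcases le_total s (2*(j:ℝ)+1) with hs | hs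
    · rw [hsum_succ]
      rw [relu_of_nonpos (by push_cast; linarith)]
      have := ih h0 hs
      simpa using this
    · have hform := hsum_formula (j+1) (s := s) (by push_cast; push_cast at hs; linarith)
      rw [hform]
      rw [abs_mul, abs_pow, abs_neg, abs_one, one_pow, one_mul, abs_le]
      push_cast at h2 hs ⊢
      constructor <;> linarith

lemma gsum_trunc {m j : ℕ} (hmj : m ≤ j) {s : ℝ} (hs : s ≤ 2*(m:ℝ) + 2) :
    gsum j s = gsum m s := by
  rw [gsum, gsum]
  refine (Finset.sum_subset (Finset.Icc_subset_Icc le_rfl hmj) ?_).symm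
  intro i hi hni
  simp only [Finset.mem_Icc] at hi hni
  have : m + 1 ≤ i := by omega
  have : (2:ℝ)*(m:ℝ) + 2 ≤ 2*(i:ℝ) := by
    have : ((m:ℝ) + 1) ≤ (i:ℝ) := by exact_mod_cast this
    linarith
  rw [relu_of_nonpos (by linarith)]
  ring

lemma hsum_trunc {m j : ℕ} (hmj : m ≤ j) {s : ℝ} (hs : s ≤ 2*(m:ℝ) + 1) :
    hsum j s = hsum m s := by
  rw [hsum, hsum]
  refine (Finset.sum_subset (Finset.range_subset_range.mpr hmj) ?_).symm
  intro i hi hni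
  simp only [Finset.mem_range] at hi hni
  have : m ≤ i := by omega
  have : (2:ℝ)*(m:ℝ) + 1 ≤ 2*(i:ℝ) + 1 := by
    have : (m:ℝ) ≤ (i:ℝ) := by exact_mod_cast this
    linarith
  rw [relu_of_nonpos (by linarith)]
  ring

lemma f2_even_eq {d : ℕ} (hd : Even d) {s : ℝ} (h0 : 0 ≤ s) (hsd : s ≤ d) :
    f2 d s = 1 - s - 2 * gsum ((d - 2) / 2) s := by
  rw [f2, if_pos hd]
  rw [relu_of_nonneg h0, relu_of_nonpos (by linarith), relu_of_nonpos (by linarith),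
    relu_of_nonpos (by linarith)]
  have hsum_eq : ∑ i ∈ Finset.Icc 1 ((d - 2) / 2),
      (-1:ℝ)^i * (relu (s - 2*i) + relu (-s - 2*i)) = gsum ((d-2)/2) s := by
    rw [gsum]
    refine Finset.sum_congr rfl fun i hi => ?_
    have hi0 : (0:ℝ) ≤ (i:ℝ) := Nat.cast_nonneg i
    rw [relu_of_nonpos (t := -s - 2*(i:ℝ)) (by linarith)]
    ring
  rw [hsum_eq]; ring

lemma f2_odd_eq {d : ℕ} (hd : ¬ Even d) {s : ℝ} (h0 : 0 ≤ s) (hsd : s ≤ d) :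
    f2 d s = s - 2 * hsum ((d - 1) / 2) s := by
  rw [f2, if_neg hd]
  rw [relu_of_nonpos (by linarith), relu_of_nonpos (by linarith)]
  have hsum_eq : ∑ i ∈ Finset.range ((d - 1) / 2),
      (-1:ℝ)^i * (-relu (s - (2*i + 1)) + relu (-s - (2*i + 1))) = -hsum ((d-1)/2) s := by
    rw [hsum, ← Finset.sum_neg_distrib]
    refine Finset.sum_congr rfl fun i hi => ?_
    have hi0 : (0:ℝ) ≤ (i:ℝ) := Nat.cast_nonneg i
    rw [relu_of_nonpos (t := -s - (2*(i:ℝ)+1)) (by linarith)]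
    ring
  rw [hsum_eq]; ring

lemma f2_neg_even {d : ℕ} (hd : Even d) (x : ℝ) : f2 d (-x) = f2 d x := by
  rw [f2, f2, if_pos hd, if_pos hd, neg_neg]
  have : ∀ j : ℕ, ∑ i ∈ Finset.Icc 1 j, (-1:ℝ)^i * (relu (-x - 2*i) + relu (x - 2*i)) =
      ∑ i ∈ Finset.Icc 1 j, (-1:ℝ)^i * (relu (x - 2*i) + relu (-x - 2*i)) := by
    intro j; refine Finset.sum_congr rfl fun i _ => by ring
  rw [this]; ring

lemma f2_neg_odd {d : ℕ} (hd : ¬ Even d) (x : ℝ) : f2 d (-x) = -f2 d x := by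
  rw [f2, f2, if_neg hd, if_neg hd, neg_neg]
  have : ∀ j : ℕ, ∑ i ∈ Finset.range j, (-1:ℝ)^i * (-relu (-x - (2*i+1)) + relu (x - (2*i+1))) =
      -∑ i ∈ Finset.range j, (-1:ℝ)^i * (-relu (x - (2*i+1)) + relu (-x - (2*i+1))) := by
    intro j
    rw [← Finset.sum_neg_distrib]
    refine Finset.sum_congr rfl fun i _ => by ring
  rw [this]; ring

lemma neg_one_pow_congr' {a b : ℕ} (h : a % 2 = b % 2) : (-1:ℝ)^a = (-1:ℝ)^b := by
  rcases Nat.even_or_odd a with ha | ha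
  · have hb : Even b := by rw [Nat.even_iff] at *; omega
    rw [ha.neg_one_pow, hb.neg_one_pow]
  · have hb : Odd b := by rw [Nat.odd_iff] at *; omega
    rw [ha.neg_one_pow, hb.neg_one_pow]

/-- Value of `f2` at points `d - 2k`, `0 ≤ 2k ≤ d`. -/
lemma f2_val_aux (d k : ℕ) (hd : 1 ≤ d) (hk : 2 * k ≤ d) :
    f2 d ((d:ℝ) - 2*k) = (-1:ℝ)^((d - 2*k)/2) := by
  set s : ℝ := (d:ℝ) - 2*k with hs_def
  have h0 : 0 ≤ s := by
    have : (2*k : ℝ) ≤ (d:ℝ) := by exact_mod_cast hk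
    simp only [hs_def]; push_cast; linarith
  have hsd : s ≤ d := by
    have : (0:ℝ) ≤ (k:ℝ) := Nat.cast_nonneg k
    simp only [hs_def]; push_cast; linarith
  by_cases hev : Even d
  · -- s = 2n with n = d/2 - k
    set n : ℕ := d/2 - k with hn_def
    have hd2 : d % 2 = 0 := Nat.even_iff.mp hev
    have hdn : d = 2 * (d/2) := by omega
    have hsn : s = 2*(n:ℝ) := by
      simp only [hs_def, hn_def]
      have h1 : (d:ℝ) = 2*((d/2 : ℕ):ℝ) := by exact_mod_cast congrArg (Nat.cast : ℕ → ℝ) hdn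
      have h2 : ((d/2 - k : ℕ):ℝ) = ((d/2:ℕ):ℝ) - (k:ℝ) := by
        have : k ≤ d/2 := by omega
        push_cast [this]; ring
      rw [h1, h2]; ring
    have hdiv : (d - 2*k)/2 = n := by omega
    rw [hdiv, f2_even_eq hev h0 hsd]
    rcases Nat.eq_zero_or_pos n with hn0 | hn0
    · have hs0 : s = 0 := by rw [hsn, hn0]; norm_num
      rw [gsum_trunc (Nat.zero_le _) (by rw [hs0]; norm_num), gsum_zero, hs0, hn0]
      norm_num
    · have hmle : n - 1 ≤ (d-2)/2 := by omega
      have htr : s ≤ 2*((n-1 : ℕ):ℝ) + 2 := by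
        have : ((n-1:ℕ):ℝ) = (n:ℝ) - 1 := by push_cast [hn0]; ring
        rw [this, hsn]; linarith
      rw [gsum_trunc hmle htr]
      have hform := gsum_formula (n-1) (s := s) (by
        have : ((n-1:ℕ):ℝ) = (n:ℝ) - 1 := by push_cast [hn0]; ring
        rw [this, hsn]; linarith)
      have hn1 : n - 1 + 1 = n := by omega
      rw [hn1] at hform
      have : ((n-1:ℕ):ℝ) = (n:ℝ) - 1 := by push_cast [hn0]; ring
      rw [this] at hform
      rw [show (1:ℝ) - s - 2 * gsum (n-1) s = (-1:ℝ)^n * (s - (2*((n:ℝ)-1)+1)) from hform, hsn]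
      ring
  · -- d odd, s = 2n+1 with n = (d-1)/2 - k
    set n : ℕ := (d-1)/2 - k with hn_def
    have hd2 : d % 2 = 1 := Nat.odd_iff.mp (Nat.not_even_iff_odd.mp hev)
    have hsn : s = 2*(n:ℝ) + 1 := by
      have h1 : d = 2*n + 2*k + 1 := by omega
      simp only [hs_def]
      have : (d:ℝ) = 2*(n:ℝ) + 2*(k:ℝ) + 1 := by exact_mod_cast congrArg (Nat.cast : ℕ → ℝ) h1
      rw [this]; ring
    have hdiv : (d - 2*k)/2 = n := by omega
    rw [hdiv, f2_odd_eq hev h0 hsd]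
    have hmle : n ≤ (d-1)/2 := by omega
    have htr : s ≤ 2*(n:ℝ) + 1 := le_of_eq hsn
    rw [hsum_trunc hmle htr]
    have hform := hsum_formula n (s := s) (by rw [hsn]; linarith)
    rw [hform, hsn]
    ring

/-- Value of `f2` at points `d - 2k`, `0 ≤ k ≤ d`. -/
lemma f2_val (d k : ℕ) (hd : 1 ≤ d) (hk : k ≤ d) :
    f2 d ((d:ℝ) - 2*k) =
      (if d % 4 = 0 ∨ d % 4 = 1 then (1:ℝ) else -1) * (-1:ℝ)^k := by
  rcases le_or_gt (2*k) d with hk2 | hk2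
  · rw [f2_val_aux d k hd hk2]
    by_cases hc : d % 4 = 0 ∨ d % 4 = 1
    · rw [if_pos hc, one_mul]
      exact neg_one_pow_congr' (by omega)
    · rw [if_neg hc, show (-1:ℝ) * (-1:ℝ)^k = (-1:ℝ)^(k+1) from by rw [pow_succ]; ring]
      exact neg_one_pow_congr' (by omega)
  · set k' := d - k with hk'
    have hk'2 : 2 * k' ≤ d := by omega
    have hcast : (d:ℝ) - 2*(k:ℕ) = -((d:ℝ) - 2*((k':ℕ):ℝ)) := by
      rw [hk']; push_cast [hk]; ring
    by_cases hev : Even d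
    · rw [hcast, f2_neg_even hev, f2_val_aux d k' hd hk'2]
      have hparity : d % 2 = 0 := Nat.even_iff.mp hev
      by_cases hc : d % 4 = 0 ∨ d % 4 = 1
      · rw [if_pos hc, one_mul]
        exact neg_one_pow_congr' (by omega)
      · rw [if_neg hc, show (-1:ℝ) * (-1:ℝ)^k = (-1:ℝ)^(k+1) from by rw [pow_succ]; ring]
        exact neg_one_pow_congr' (by omega)
    · rw [hcast, f2_neg_odd hev, f2_val_aux d k' hd hk'2]
      have hparity : d % 2 = 1 := Nat.odd_iff.mp (Nat.not_even_iff_odd.mp hev)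
      by_cases hc : d % 4 = 0 ∨ d % 4 = 1
      · rw [if_pos hc, one_mul,
          show -(-1:ℝ)^((d-2*k')/2) = (-1:ℝ)^((d-2*k')/2 + 1) from by rw [pow_succ]; ring]
        exact neg_one_pow_congr' (by omega)
      · rw [if_neg hc,
          show -(-1:ℝ)^((d-2*k')/2) = (-1:ℝ)^((d-2*k')/2 + 1) from by rw [pow_succ]; ring,
          show (-1:ℝ) * (-1:ℝ)^k = (-1:ℝ)^(k+1) from by rw [pow_succ]; ring]
        exact neg_one_pow_congr' (by omega)

lemma abs_f2_le (d : ℕ) (hd : 1 ≤ d) {s : ℝ} (hs : |s| ≤ d) : |f2 d s| ≤ 1 := by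
  have key : ∀ t : ℝ, 0 ≤ t → t ≤ d → |f2 d t| ≤ 1 := by
    intro t h0 htd
    by_cases hev : Even d
    · rw [f2_even_eq hev h0 htd]
      apply gsum_abs _ h0
      have h2 : 2*((d-2)/2) + 2 = d := by
        have := Nat.even_iff.mp hev; omega
      have hcast : 2*(((d-2)/2 : ℕ):ℝ) + 2 = (d:ℝ) := by exact_mod_cast congrArg (Nat.cast : ℕ → ℝ) h2
      rw [hcast]; exact htd
    · rw [f2_odd_eq hev h0 htd]
      apply hsum_abs _ h0
      have h2 : 2*((d-1)/2) + 1 = d := by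
        have := Nat.odd_iff.mp (Nat.not_even_iff_odd.mp hev); omega
      have hcast : 2*(((d-1)/2 : ℕ):ℝ) + 1 = (d:ℝ) := by exact_mod_cast congrArg (Nat.cast : ℕ → ℝ) h2
      rw [hcast]; exact htd
  rcases le_total 0 s with h0 | h0
  · exact key s h0 (le_of_abs_le hs)
  · have hms : -s ≤ d := by
      have := neg_le_of_abs_le hs; linarith
    have h1 := key (-s) (by linarith) hms
    by_cases hev : Even d
    · have e := f2_neg_even hev (-s)
      rw [neg_neg] at e
      rw [e]; exact h1
    · have e := f2_neg_odd hev (-s)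
      rw [neg_neg] at e
      rw [e, abs_neg]; exact h1

lemma Bset_ne_zero {b : ℝ} (hb : b ∈ Bset) : b ≠ 0 := by
  simp only [Bset, Finset.mem_insert, Finset.mem_singleton] at hb
  rcases hb with rfl | rfl | rfl | rfl <;> norm_num

/-- number of negative coordinates -/
def negCard {d : ℕ} (β : Fin d → ℝ) : ℕ :=
  (Finset.univ.filter fun i => β i < 0).card

lemma sum_signs {d : ℕ} (β : Fin d → ℝ) :
    ∑ i, (if β i < 0 then (-1:ℝ) else 1) = (d:ℝ) - 2 * negCard β := by
  classical
  rw [Finset.sum_ite, Finset.sum_const, Finset.sum_const]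
  set k := (Finset.univ.filter fun i : Fin d => β i < 0).card with hk
  have hle : k ≤ d := by
    simpa [hk] using Finset.card_filter_le (Finset.univ : Finset (Fin d)) (fun i => β i < 0)
  have hcard : (Finset.univ.filter fun i : Fin d => ¬ β i < 0).card = d - k := by
    have h := Finset.card_filter_add_card_filter_not
      (s := (Finset.univ : Finset (Fin d))) (p := fun i : Fin d => β i < 0)
    simp only [Finset.card_univ, Fintype.card_fin] at h
    omega
  rw [hcard, negCard, ← hk]
  simp only [nsmul_eq_mul, smul_eq_mul]
  push_cast [hle]
  ring

lemma prod_eq_sign_mul {d : ℕ} (β : Fin d → ℝ) (hβ : ∀ i, β i ∈ Bset) :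
    ∏ i, β i = (-1:ℝ)^(negCard β) * ∏ i, |β i| := by
  have h1 : ∀ i, β i = (if β i < 0 then (-1:ℝ) else 1) * |β i| := by
    intro i
    rcases lt_trichotomy (β i) 0 with h | h | h
    · rw [if_pos h, abs_of_neg h]; ring
    · exact absurd h (Bset_ne_zero (hβ i))
    · rw [if_neg (not_lt.mpr h.le), abs_of_pos h]; ring
  calc ∏ i, β i = ∏ i, ((if β i < 0 then (-1:ℝ) else 1) * |β i|) :=
        Finset.prod_congr rfl fun i _ => h1 i
    _ = (∏ i, (if β i < 0 then (-1:ℝ) else 1)) * ∏ i, |β i| := Finset.prod_mul_distrib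
    _ = (-1:ℝ)^(negCard β) * ∏ i, |β i| := by
        rw [Finset.prod_ite, Finset.prod_const, Finset.prod_const, negCard]
        simp

lemma even_negCard_of_prod_pos {d : ℕ} (β : Fin d → ℝ) (hβ : ∀ i, β i ∈ Bset)
    (h : 0 < ∏ i, β i) : Even (negCard β) := by
  have habs : 0 < ∏ i, |β i| :=
    Finset.prod_pos fun i _ => abs_pos.mpr (Bset_ne_zero (hβ i))
  rw [prod_eq_sign_mul β hβ] at h
  by_contra hodd
  rw [Nat.not_even_iff_odd] at hodd
  rw [hodd.neg_one_pow] at h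
  nlinarith

lemma odd_negCard_of_prod_neg {d : ℕ} (β : Fin d → ℝ) (hβ : ∀ i, β i ∈ Bset)
    (h : ∏ i, β i < 0) : Odd (negCard β) := by
  have habs : 0 < ∏ i, |β i| :=
    Finset.prod_pos fun i _ => abs_pos.mpr (Bset_ne_zero (hβ i))
  rw [prod_eq_sign_mul β hβ] at h
  by_contra heven
  rw [Nat.not_odd_iff_even] at heven
  rw [heven.neg_one_pow] at h
  nlinarith

lemma Fdisc_eq {d : ℕ} (hd : 1 ≤ d) {x0 : ℝ} (hx0 : 0 < x0) (hx0' : x0 < 1/4)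
    (β t : Fin d → ℝ) (hβ : ∀ i, β i ∈ Bset) (ht : ∀ i, |t i| ≤ x0) :
    Fdisc d x0 (β + t) =
      (if d % 4 = 0 ∨ d % 4 = 1 then (1:ℝ) else -1) * (-1:ℝ)^(negCard β) := by
  have hknat : negCard β ≤ d := by
    have := Finset.card_filter_le (Finset.univ : Finset (Fin d)) (fun i => β i < 0)
    simpa [negCard] using this
  have hsum : ∑ i, f1 x0 ((β + t) i) = (d:ℝ) - 2 * negCard β := by
    rw [← sum_signs β]
    refine Finset.sum_congr rfl fun i _ => ?_
    rw [Pi.add_apply]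
    exact f1_near hx0 hx0' (hβ i) (ht i)
  rw [Fdisc, hsum, f2_val d (negCard β) hd hknat]

lemma abs_Fdisc_le {d : ℕ} (hd : 1 ≤ d) {x0 : ℝ} (hx0 : 0 < x0) (hx0' : x0 < 1/4)
    (x : Fin d → ℝ) : |Fdisc d x0 x| ≤ 1 := by
  rw [Fdisc]
  apply abs_f2_le d hd
  calc |∑ i, f1 x0 (x i)| ≤ ∑ i, |f1 x0 (x i)| := Finset.abs_sum_le_sum_abs _ _
    _ ≤ ∑ _i : Fin d, (1:ℝ) := Finset.sum_le_sum fun i _ => abs_f1_le hx0 hx0' (x i)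
    _ = d := by simp

@[fun_prop]
lemma continuous_relu : Continuous relu := continuous_id.max continuous_const

lemma continuous_f1 (x0 : ℝ) : Continuous (f1 x0) := by
  unfold f1
  refine continuous_finset_sum _ fun β _ => Continuous.mul continuous_const ?_
  refine ((Continuous.sub (Continuous.sub ?_ ?_) ?_).add ?_) <;>
    exact continuous_relu.comp (continuous_id.sub continuous_const)

lemma continuous_f2 (d : ℕ) : Continuous (f2 d) := by
  by_cases hev : Even d
  · have : f2 d = fun x => 1 - relu x - relu (-x) -
        (-1 : ℝ) ^ (d / 2) * (relu (x - d) + relu (-x - d)) -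
        2 * ∑ i ∈ Finset.Icc 1 ((d - 2) / 2),
          (-1 : ℝ) ^ i * (relu (x - 2 * i) + relu (-x - 2 * i)) := by
      funext x; rw [f2, if_pos hev]
    rw [this]
    fun_prop
  · have : f2 d = fun x => x + (-1 : ℝ) ^ ((d - 1) / 2) * (-relu (x - d) + relu (-x - d)) +
        2 * ∑ i ∈ Finset.range ((d - 1) / 2),
          (-1 : ℝ) ^ i * (-relu (x - (2 * i + 1)) + relu (-x - (2 * i + 1))) := by
      funext x; rw [f2, if_neg hev]
    rw [this]
    fun_prop

lemma continuous_Fdisc (d : ℕ) (x0 : ℝ) : Continuous (Fdisc d x0) := by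
  unfold Fdisc
  exact (continuous_f2 d).comp
    (continuous_finset_sum _ fun i _ => (continuous_f1 x0).comp (continuous_apply i))

section GaussTail
open Filter Set Real

lemma gaussian_deriv_aux {σ : ℝ} (hσ : 0 < σ) (C : ℝ) (y : ℝ) :
    HasDerivAt (fun y : ℝ => -(C * σ^2) * Real.exp (-y^2/(2*σ^2)))
      (C * y * Real.exp (-y^2/(2*σ^2))) y := by
  have h1 : HasDerivAt (fun y : ℝ => -y^2/(2*σ^2)) (-(2*y)/(2*σ^2)) y := by
    have := ((hasDerivAt_pow 2 y).neg).div_const (2*σ^2)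
    simpa using this
  have h3 := (h1.exp).const_mul (-(C * σ^2))
  refine h3.congr_deriv ?_
  have hσ2 : (2:ℝ)*σ^2 ≠ 0 := by positivity
  field_simp

lemma gaussian_tendsto_aux {σ : ℝ} (hσ : 0 < σ) (C : ℝ) :
    Tendsto (fun y : ℝ => -(C * σ^2) * Real.exp (-y^2/(2*σ^2))) atTop (nhds 0) := by
  have t1 : Tendsto (fun y : ℝ => y^2) atTop atTop := tendsto_pow_atTop two_ne_zero
  have t2 : Tendsto (fun y : ℝ => y^2/(2*σ^2)) atTop atTop :=
    t1.atTop_div_const (by positivity)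
  have t3 : Tendsto (fun y : ℝ => -y^2/(2*σ^2)) atTop atBot := by
    have := tendsto_neg_atTop_atBot.comp t2
    refine this.congr fun y => ?_
    simp [neg_div]
  have t4 := Real.tendsto_exp_atBot.comp t3
  have t5 := t4.const_mul (-(C * σ^2))
  simpa using t5

lemma gaussian_tail_Ioi {σ x0 : ℝ} (hσ : 0 < σ) (hx0 : 0 < x0) :
    ∫ y in Set.Ioi x0, gaussianPDFReal 0 ⟨σ^2, sq_nonneg σ⟩ y ≤
      σ / (Real.sqrt (2*Real.pi) * x0) * Real.exp (-x0^2 / (2*σ^2)) := by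
  set v : NNReal := ⟨σ^2, sq_nonneg σ⟩ with hv
  set C : ℝ := (Real.sqrt (2*Real.pi*σ^2))⁻¹ with hC
  have hπ : (0:ℝ) < 2*Real.pi := by positivity
  have hC0 : 0 < C := by rw [hC]; positivity
  have hpdf : ∀ y : ℝ, gaussianPDFReal 0 v y = C * Real.exp (-y^2/(2*σ^2)) := by
    intro y
    rw [gaussianPDFReal]
    norm_num [hv, hC]
    rfl
  set φ : ℝ → ℝ := fun y => C * y * Real.exp (-y^2/(2*σ^2)) with hφ
  have hderiv : ∀ y ∈ Set.Ici x0, HasDerivAt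
      (fun y : ℝ => -(C * σ^2) * Real.exp (-y^2/(2*σ^2))) (φ y) y :=
    fun y _ => gaussian_deriv_aux hσ C y
  have hpos : ∀ y ∈ Set.Ioi x0, 0 ≤ φ y := by
    intro y hy
    simp only [Set.mem_Ioi] at hy
    have : 0 < y := lt_trans hx0 hy
    rw [hφ]
    positivity
  have hint : IntegrableOn φ (Set.Ioi x0) :=
    integrableOn_Ioi_deriv_of_nonneg' hderiv hpos (gaussian_tendsto_aux hσ C)
  have hval : ∫ y in Set.Ioi x0, φ y = C * σ^2 * Real.exp (-x0^2/(2*σ^2)) := by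
    rw [integral_Ioi_of_hasDerivAt_of_tendsto' hderiv hint (gaussian_tendsto_aux hσ C)]
    ring
  have hmono : ∫ y in Set.Ioi x0, gaussianPDFReal 0 v y ≤
      ∫ y in Set.Ioi x0, (1/x0) * φ y := by
    refine setIntegral_mono_on ((integrable_gaussianPDFReal 0 v).integrableOn)
      (hint.const_mul (1/x0)) measurableSet_Ioi ?_
    intro y hy
    simp only [Set.mem_Ioi] at hy
    rw [hpdf y, hφ]
    have hy0 : 0 < y := lt_trans hx0 hy
    have hexp : 0 < Real.exp (-y^2/(2*σ^2)) := Real.exp_pos _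
    have h1 : 1 ≤ y / x0 := (one_le_div hx0).mpr hy.le
    have : C * Real.exp (-y^2/(2*σ^2)) ≤ (y/x0) * (C * Real.exp (-y^2/(2*σ^2))) := by
      have h2 := mul_le_mul_of_nonneg_right h1 (mul_nonneg hC0.le hexp.le)
      linarith
    calc C * Real.exp (-y^2/(2*σ^2)) ≤ (y/x0) * (C * Real.exp (-y^2/(2*σ^2))) := this
      _ = 1/x0 * (C * y * Real.exp (-y^2/(2*σ^2))) := by ring
  calc ∫ y in Set.Ioi x0, gaussianPDFReal 0 v y ≤ ∫ y in Set.Ioi x0, (1/x0) * φ y := hmono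
    _ = (1/x0) * ∫ y in Set.Ioi x0, φ y := by rw [integral_const_mul]
    _ = (1/x0) * (C * σ^2 * Real.exp (-x0^2/(2*σ^2))) := by rw [hval]
    _ = σ / (Real.sqrt (2*Real.pi) * x0) * Real.exp (-x0^2 / (2*σ^2)) := by
        rw [hC]
        have hsq : Real.sqrt (2*Real.pi*σ^2) = Real.sqrt (2*Real.pi) * σ := by
          rw [Real.sqrt_mul hπ.le, Real.sqrt_sq hσ.le]
        rw [hsq]
        have h2 : Real.sqrt (2*Real.pi) ≠ 0 := by positivity
        field_simp

lemma gaussian_tail {σ x0 : ℝ} (hσ : 0 < σ) (hx0 : 0 < x0) :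
    gaussianReal 0 ⟨σ^2, sq_nonneg σ⟩ {y | x0 < |y|} ≤
      ENNReal.ofReal (2 * (σ / (Real.sqrt (2*Real.pi) * x0) * Real.exp (-x0^2 / (2*σ^2)))) := by
  set v : NNReal := ⟨σ^2, sq_nonneg σ⟩ with hv
  have hvne : v ≠ 0 := by
    intro h
    have : σ^2 = 0 := congrArg NNReal.toReal h
    nlinarith
  set K : ℝ := σ / (Real.sqrt (2*Real.pi) * x0) * Real.exp (-x0^2 / (2*σ^2)) with hK
  have hK0 : 0 ≤ K := by rw [hK]; positivity
  have hsub : {y : ℝ | x0 < |y|} ⊆ Set.Iic (-x0) ∪ Set.Ioi x0 := by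
    intro y hy
    simp only [Set.mem_setOf_eq] at hy
    rcases abs_cases y with ⟨h1, _⟩ | ⟨h1, _⟩
    · right; simpa [Set.mem_Ioi] using h1 ▸ hy
    · left; simp only [Set.mem_Iic]; rw [h1] at hy; linarith
  have hIoi : gaussianReal 0 v (Set.Ioi x0) ≤ ENNReal.ofReal K := by
    rw [gaussianReal_apply_eq_integral 0 hvne]
    exact ENNReal.ofReal_le_ofReal (gaussian_tail_Ioi hσ hx0)
  have hIic : gaussianReal 0 v (Set.Iic (-x0)) ≤ ENNReal.ofReal K := by
    rw [gaussianReal_apply_eq_integral 0 hvne]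
    apply ENNReal.ofReal_le_ofReal
    have hflip : ∫ y in Set.Iic (-x0), gaussianPDFReal 0 v y =
        ∫ y in Set.Ioi x0, gaussianPDFReal 0 v y := by
      rw [← integral_comp_neg_Ioi]
      refine setIntegral_congr_fun measurableSet_Ioi fun y _ => ?_
      simp [gaussianPDFReal, neg_sq]
    rw [hflip]
    exact gaussian_tail_Ioi hσ hx0
  calc gaussianReal 0 v {y | x0 < |y|} ≤ gaussianReal 0 v (Set.Iic (-x0) ∪ Set.Ioi x0) :=
        measure_mono hsub
    _ ≤ gaussianReal 0 v (Set.Iic (-x0)) + gaussianReal 0 v (Set.Ioi x0) := measure_union_le _ _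
    _ ≤ ENNReal.ofReal K + ENNReal.ofReal K := add_le_add hIic hIoi
    _ = ENNReal.ofReal (2 * K) := by
        rw [← ENNReal.ofReal_add hK0 hK0]; congr 1; ring

end GaussTail

lemma pi_eval_apply {d : ℕ} (μ : Measure ℝ) [IsProbabilityMeasure μ] (i : Fin d)
    {S : Set ℝ} (hS : MeasurableSet S) :
    Measure.pi (fun _ : Fin d => μ) (Function.eval i ⁻¹' S) = μ S := by
  rw [Set.eval_preimage, Measure.pi_pi]
  refine (Finset.prod_eq_single i (fun j _ hj => ?_) (fun h => absurd (Finset.mem_univ i) h)).trans ?_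
  · rw [Function.update_of_ne hj]; exact measure_univ
  · rw [Function.update_self]

lemma uniformOn_compl_eq_zero {α : Type*} [MeasurableSpace α] {S : Set α}
    (hS : MeasurableSet S) : uniformOn S Sᶜ = 0 := by
  rw [uniformOn, ProbabilityTheory.cond_apply hS]
  simp

/-- key real bound helper -/
lemma integral_diff_bound {Ω : Type*} [MeasurableSpace Ω] (P : Measure Ω)
    [IsProbabilityMeasure P] (u w : Ω → ℝ) (hu : Integrable u P) (hw : Integrable w P)
    (T : Set Ω) (hT : MeasurableSet T) (hval : ∀ ω ∈ T, u ω - w ω = 2)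
    (hbound : ∀ ω, -2 ≤ u ω - w ω) {ε : ℝ} (hp : 1 - 2*ε ≤ (P T).toReal) :
    2 - 8*ε ≤ (∫ ω, u ω ∂P) - ∫ ω, w ω ∂P := by
  have huw : Integrable (fun ω => u ω - w ω) P := hu.sub hw
  have hsplit : (∫ ω, (u ω - w ω) ∂P) =
      (∫ ω in T, (u ω - w ω) ∂P) + ∫ ω in Tᶜ, (u ω - w ω) ∂P :=
    (integral_add_compl hT huw).symm
  have hPT1 : (P T).toReal ≤ 1 := by
    have h := ENNReal.toReal_mono ENNReal.one_ne_top (prob_le_one (μ := P) (s := T))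
    simpa using h
  have hTval : (∫ ω in T, (u ω - w ω) ∂P) = (P T).toReal * 2 := by
    rw [setIntegral_congr_fun hT (fun ω hω => hval ω hω)]
    rw [setIntegral_const]
    simp [smul_eq_mul]
    rfl
  have hTc : (P Tᶜ).toReal = 1 - (P T).toReal := by
    rw [prob_compl_eq_one_sub hT,
      ENNReal.toReal_sub_of_le prob_le_one ENNReal.one_ne_top]
    simp
  have hTcval : -(2 * (1 - (P T).toReal)) ≤ ∫ ω in Tᶜ, (u ω - w ω) ∂P := by
    have hmono : (∫ ω in Tᶜ, (-2 : ℝ) ∂P) ≤ ∫ ω in Tᶜ, (u ω - w ω) ∂P := by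
      refine setIntegral_mono_on (integrable_const _).integrableOn
        huw.integrableOn hT.compl fun ω _ => hbound ω
    rw [setIntegral_const, measureReal_def, hTc] at hmono
    calc -(2 * (1 - (P T).toReal)) = (1 - (P T).toReal) • (-2:ℝ) := by
          simp [smul_eq_mul]; ring
      _ ≤ _ := hmono
  have := integral_sub hu hw
  calc 2 - 8*ε ≤ (P T).toReal * 2 + -(2 * (1 - (P T).toReal)) := by nlinarith
    _ ≤ (∫ ω in T, (u ω - w ω) ∂P) + ∫ ω in Tᶜ, (u ω - w ω) ∂P := by
        rw [hTval]; exact add_le_add_right hTcval _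
    _ = ∫ ω, (u ω - w ω) ∂P := hsplit.symm
    _ = (∫ ω, u ω ∂P) - ∫ ω, w ω ∂P := integral_sub hu hw

theorem Z_pm_high_prob
    {Ω : Type*} [MeasurableSpace Ω] (P : Measure Ω) [IsProbabilityMeasure P]
    (d : ℕ) (hd : 3 ≤ d) (x0 ε σ : ℝ) (hx0 : x0 ∈ Set.Ioo (0 : ℝ) (1/4))
    (hε : ε ∈ Set.Ioo (0 : ℝ) 1) (hσ : 0 < σ)
    (heq : x0 ^ 2 / (2 * σ ^ 2) =
      Real.log ((d : ℝ) * σ / (Real.sqrt (2 * Real.pi) * ε * x0)))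
    (ξp ξm X : Ω → (Fin d → ℝ))
    (hξpm : Measurable ξp) (hξmm : Measurable ξm) (hXm : Measurable X)
    (hlawp : Measure.map ξp P = uniformOn (BdPlus d : Set (Fin d → ℝ)))
    (hlawm : Measure.map ξm P = uniformOn (BdMinus d : Set (Fin d → ℝ)))
    (hlawX : Measure.map X P =
      Measure.pi fun _ : Fin d => gaussianReal 0 ⟨σ ^ 2, sq_nonneg σ⟩)
    (hindep : IndepFun (fun ω => (ξp ω, ξm ω)) X P) :
    ENNReal.ofReal (1 - 2 * ε) ≤
      P {ω | if d % 4 = 0 ∨ d % 4 = 1 then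
              Fdisc d x0 (ξp ω + X ω) = 1 ∧ Fdisc d x0 (ξm ω + X ω) = -1
            else
              Fdisc d x0 (ξp ω + X ω) = -1 ∧ Fdisc d x0 (ξm ω + X ω) = 1} ∧
    2 - 8 * ε ≤
      |(∫ ω, Fdisc d x0 (ξp ω + X ω) ∂P) - ∫ ω, Fdisc d x0 (ξm ω + X ω) ∂P| := by
  obtain ⟨hx01, hx02⟩ := hx0
  obtain ⟨hε1, hε2⟩ := hε
  have hd1 : 1 ≤ d := by omega
  have hd0 : (0:ℝ) < d := by exact_mod_cast (by omega : 0 < d)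
  have hπ : (0:ℝ) < Real.sqrt (2*Real.pi) := Real.sqrt_pos.mpr (by positivity)
  have hRpos : (0:ℝ) < (d:ℝ) * σ / (Real.sqrt (2*Real.pi) * ε * x0) := by positivity
  have hexp : Real.exp (-x0^2 / (2*σ^2)) =
      Real.sqrt (2*Real.pi) * ε * x0 / ((d:ℝ) * σ) := by
    rw [neg_div, heq, Real.exp_neg, Real.exp_log hRpos, inv_div]
  have hKval : 2 * (σ / (Real.sqrt (2*Real.pi) * x0) * Real.exp (-x0^2 / (2*σ^2)))
      = 2 * ε / d := by
    rw [hexp]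
    field_simp
  set G : Set Ω := {ω | ∀ i, |X ω i| ≤ x0} with hG_def
  have hmeasXi : ∀ i : Fin d, Measurable fun ω => X ω i :=
    fun i => (measurable_pi_apply i).comp hXm
  have hGm : MeasurableSet G := by
    have hGi : G = ⋂ i, (fun ω => |X ω i|) ⁻¹' (Set.Iic x0) := by
      ext ω; simp [hG_def]
    rw [hGi]
    exact MeasurableSet.iInter fun i => ((hmeasXi i).abs) measurableSet_Iic
  have hSmeas : MeasurableSet {y : ℝ | x0 < |y|} := by
    have h1 : {y : ℝ | x0 < |y|} = (fun y : ℝ => |y|) ⁻¹' Set.Ioi x0 := rfl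
    rw [h1]; exact measurable_abs measurableSet_Ioi
  have hbadi : ∀ i : Fin d, P {ω | x0 < |X ω i|} ≤ ENNReal.ofReal (2*ε/d) := by
    intro i
    have h1 : {ω | x0 < |X ω i|} = X ⁻¹' (Function.eval i ⁻¹' {y | x0 < |y|}) := rfl
    rw [h1, ← Measure.map_apply hXm ((measurable_pi_apply i) hSmeas), hlawX,
      @pi_eval_apply d (gaussianReal 0 ⟨σ ^ 2, sq_nonneg σ⟩)
        (instIsProbabilityMeasureGaussianReal _ _) i _ hSmeas, ← hKval]
    exact gaussian_tail hσ hx01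
  have hGc : P Gᶜ ≤ ENNReal.ofReal (2*ε) := by
    have hsub : Gᶜ ⊆ ⋃ i, {ω | x0 < |X ω i|} := by
      intro ω hω
      simp only [hG_def, Set.mem_compl_iff, Set.mem_setOf_eq, not_forall, not_le] at hω
      obtain ⟨i, hi⟩ := hω
      exact Set.mem_iUnion.mpr ⟨i, hi⟩
    calc P Gᶜ ≤ P (⋃ i, {ω | x0 < |X ω i|}) := measure_mono hsub
      _ ≤ ∑ i : Fin d, P {ω | x0 < |X ω i|} := measure_iUnion_fintype_le _ _
      _ ≤ ∑ _i : Fin d, ENNReal.ofReal (2*ε/d) := Finset.sum_le_sum fun i _ => hbadi i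
      _ = (d : ℝ≥0∞) * ENNReal.ofReal (2*ε/d) := by
          rw [Finset.sum_const, Finset.card_univ]; simp [nsmul_eq_mul]
      _ = ENNReal.ofReal (2*ε) := by
          rw [← ENNReal.ofReal_natCast d, ← ENNReal.ofReal_mul (by positivity)]
          congr 1
          field_simp
  have hPG : ENNReal.ofReal (1 - 2*ε) ≤ P G := by
    rcases le_or_gt (1 - 2*ε) 0 with h | h
    · simp [ENNReal.ofReal_eq_zero.mpr h]
    · have hsum : P G + P Gᶜ = 1 := by
        rw [measure_add_measure_compl hGm]; exact measure_univ
      have h2 : ENNReal.ofReal (1 - 2*ε) + P Gᶜ ≤ P G + P Gᶜ := by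
        rw [hsum]
        calc ENNReal.ofReal (1 - 2*ε) + P Gᶜ
            ≤ ENNReal.ofReal (1-2*ε) + ENNReal.ofReal (2*ε) := add_le_add_right hGc _
          _ = ENNReal.ofReal 1 := by rw [← ENNReal.ofReal_add h.le (by positivity)]; norm_num
          _ = 1 := ENNReal.ofReal_one
      exact ENNReal.le_of_add_le_add_right (measure_ne_top P Gᶜ) h2
  have hBdPm : MeasurableSet (↑(BdPlus d) : Set (Fin d → ℝ)) :=
    (BdPlus d).finite_toSet.measurableSet
  have hBdMm : MeasurableSet (↑(BdMinus d) : Set (Fin d → ℝ)) :=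
    (BdMinus d).finite_toSet.measurableSet
  have hNp : P (ξp ⁻¹' (↑(BdPlus d))ᶜ) = 0 := by
    rw [← Measure.map_apply hξpm hBdPm.compl, hlawp]
    exact uniformOn_compl_eq_zero hBdPm
  have hNm : P (ξm ⁻¹' (↑(BdMinus d))ᶜ) = 0 := by
    rw [← Measure.map_apply hξmm hBdMm.compl, hlawm]
    exact uniformOn_compl_eq_zero hBdMm
  set E : Set Ω := (G ∩ ξp ⁻¹' ↑(BdPlus d)) ∩ ξm ⁻¹' ↑(BdMinus d) with hE_def
  have hPE : ENNReal.ofReal (1 - 2*ε) ≤ P E := by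
    have hEeq : E = G \ (ξp ⁻¹' (↑(BdPlus d))ᶜ ∪ ξm ⁻¹' (↑(BdMinus d))ᶜ) := by
      ext ω
      simp only [hE_def, Set.mem_inter_iff, Set.mem_diff, Set.mem_union, Set.mem_preimage,
        Set.mem_compl_iff]
      tauto
    rw [hEeq, measure_diff_null (measure_union_null hNp hNm)]
    exact hPG
  set T : Set Ω := {ω | if d % 4 = 0 ∨ d % 4 = 1 then
              Fdisc d x0 (ξp ω + X ω) = 1 ∧ Fdisc d x0 (ξm ω + X ω) = -1
            else
              Fdisc d x0 (ξp ω + X ω) = -1 ∧ Fdisc d x0 (ξm ω + X ω) = 1} with hT_def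
  have hET : E ⊆ T := by
    intro ω hω
    obtain ⟨⟨hωG, hωp⟩, hωm⟩ := hω
    have hωG' : ∀ i, |X ω i| ≤ x0 := hωG
    have hmp := Finset.mem_filter.mp (Finset.mem_coe.mp hωp)
    have hmm := Finset.mem_filter.mp (Finset.mem_coe.mp hωm)
    have hβp : ∀ i, ξp ω i ∈ Bset := Fintype.mem_piFinset.mp hmp.1
    have hβm : ∀ i, ξm ω i ∈ Bset := Fintype.mem_piFinset.mp hmm.1
    have hueq := Fdisc_eq hd1 hx01 hx02 (ξp ω) (X ω) hβp hωG'
    have hweq := Fdisc_eq hd1 hx01 hx02 (ξm ω) (X ω) hβm hωG'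
    have hevp := even_negCard_of_prod_pos (ξp ω) hβp hmp.2
    have hodm := odd_negCard_of_prod_neg (ξm ω) hβm hmm.2
    rw [hevp.neg_one_pow, mul_one] at hueq
    rw [hodm.neg_one_pow, mul_neg_one] at hweq
    simp only [hT_def, Set.mem_setOf_eq]
    by_cases hC : d % 4 = 0 ∨ d % 4 = 1
    · rw [if_pos hC]
      rw [if_pos hC] at hueq hweq
      exact ⟨hueq, by rw [hweq]⟩
    · rw [if_neg hC]
      rw [if_neg hC] at hueq hweq
      refine ⟨hueq, by rw [hweq]; norm_num⟩
  have hPT : ENNReal.ofReal (1 - 2*ε) ≤ P T := le_trans hPE (measure_mono hET)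
  have haddp : Measurable (fun ω => ξp ω + X ω) :=
    measurable_pi_iff.mpr fun i =>
      ((measurable_pi_apply i).comp hξpm).add ((measurable_pi_apply i).comp hXm)
  have haddm : Measurable (fun ω => ξm ω + X ω) :=
    measurable_pi_iff.mpr fun i =>
      ((measurable_pi_apply i).comp hξmm).add ((measurable_pi_apply i).comp hXm)
  have hum : Measurable (fun ω => Fdisc d x0 (ξp ω + X ω)) :=
    (continuous_Fdisc d x0).measurable.comp haddp
  have hwm : Measurable (fun ω => Fdisc d x0 (ξm ω + X ω)) :=
    (continuous_Fdisc d x0).measurable.comp haddm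
  have hubd : ∀ ω, ‖Fdisc d x0 (ξp ω + X ω)‖ ≤ 1 := fun ω => by
    rw [Real.norm_eq_abs]; exact abs_Fdisc_le hd1 hx01 hx02 _
  have hwbd : ∀ ω, ‖Fdisc d x0 (ξm ω + X ω)‖ ≤ 1 := fun ω => by
    rw [Real.norm_eq_abs]; exact abs_Fdisc_le hd1 hx01 hx02 _
  have huI : Integrable (fun ω => Fdisc d x0 (ξp ω + X ω)) P :=
    (integrable_const (1:ℝ)).mono' hum.aestronglyMeasurable (ae_of_all _ hubd)
  have hwI : Integrable (fun ω => Fdisc d x0 (ξm ω + X ω)) P :=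
    (integrable_const (1:ℝ)).mono' hwm.aestronglyMeasurable (ae_of_all _ hwbd)
  have hTm : MeasurableSet T := by
    by_cases hC : d % 4 = 0 ∨ d % 4 = 1
    · have hTset : T = (fun ω => Fdisc d x0 (ξp ω + X ω)) ⁻¹' {1} ∩
          (fun ω => Fdisc d x0 (ξm ω + X ω)) ⁻¹' {-1} := by
        ext ω; simp [hT_def, hC]
      rw [hTset]
      exact (hum (measurableSet_singleton _)).inter (hwm (measurableSet_singleton _))
    · have hTset : T = (fun ω => Fdisc d x0 (ξp ω + X ω)) ⁻¹' {-1} ∩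
          (fun ω => Fdisc d x0 (ξm ω + X ω)) ⁻¹' {1} := by
        ext ω; simp [hT_def, hC]
      rw [hTset]
      exact (hum (measurableSet_singleton _)).inter (hwm (measurableSet_singleton _))
  have hPTr : 1 - 2*ε ≤ (P T).toReal := by
    rcases le_or_gt (1-2*ε) 0 with h|h
    · exact le_trans h ENNReal.toReal_nonneg
    · refine (ENNReal.ofReal_le_iff_le_toReal (measure_ne_top P T)).mp hPT
  refine ⟨hPT, ?_⟩
  by_cases hC : d % 4 = 0 ∨ d % 4 = 1
  · have hval : ∀ ω ∈ T, Fdisc d x0 (ξp ω + X ω) - Fdisc d x0 (ξm ω + X ω) = 2 := by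
      intro ω hω
      simp only [hT_def, Set.mem_setOf_eq, if_pos hC] at hω
      rw [hω.1, hω.2]; norm_num
    have hbound : ∀ ω, -2 ≤ Fdisc d x0 (ξp ω + X ω) - Fdisc d x0 (ξm ω + X ω) := by
      intro ω
      have h1 := hubd ω; have h2 := hwbd ω
      rw [Real.norm_eq_abs, abs_le] at h1 h2
      linarith [h1.1, h2.2]
    have := integral_diff_bound P _ _ huI hwI T hTm hval hbound hPTr
    exact le_trans this (le_abs_self _)
  · have hval : ∀ ω ∈ T, Fdisc d x0 (ξm ω + X ω) - Fdisc d x0 (ξp ω + X ω) = 2 := by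
      intro ω hω
      simp only [hT_def, Set.mem_setOf_eq, if_neg hC] at hω
      rw [hω.1, hω.2]; norm_num
    have hbound : ∀ ω, -2 ≤ Fdisc d x0 (ξm ω + X ω) - Fdisc d x0 (ξp ω + X ω) := by
      intro ω
      have h1 := hubd ω; have h2 := hwbd ω
      rw [Real.norm_eq_abs, abs_le] at h1 h2
      linarith [h1.2, h2.1]
    have hmain := integral_diff_bound P _ _ hwI huI T hTm hval hbound hPTr
    rw [abs_sub_comm]
    exact le_trans hmain (le_abs_self _)

end
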